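/- For a multisegment Δ and integer i, define the i-hat signature: list Δ in left order; write − for each segment with first coordinate i, + for each segment with first coordinate i+1, blank otherwise; cancel +− pairs (note: reversed orientation), leaving −⋯−+⋯+. Define Ê_i(Δ) by replacing the segment (i, z) of the rightmost uncanceled − by (i+1, z) (with (i+1, z) deleted if i+1 > z, i.e., if z = i). Then, when nonzero, Ê_i(Δ) is a multisegment with n(Ê_i(Δ)) = n(Δ) − 1. -/

import Mathlib

/-- Weak left order on segments: `s ⪰ t` iff `s.2 > t.2`, or `s.2 = t.2` and `t.1 ≥ s.1`. -/
def lGE (s t : ℤ × ℤ) : Prop := t.2 < s.2 ∨ (s.2 = t.2 ∧ s.1 ≤ t.1)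

/-- `n(Δ)`: the total number of boxes of a multisegment. -/
def nOf (Δ : List (ℤ × ℤ)) : ℤ := (Δ.map (fun s => s.2 - s.1 + 1)).sum

/-- Reduction of the `i`-hat signature of a list of segments (in left order): a segment
with first coordinate `i` is a `-`, one with first coordinate `i+1` is a `+`, all others
are blank; adjacent `+-` pairs cancel, leaving `- ⋯ - + ⋯ +`. -/
def redSegHat (i : ℤ) : List (ℤ × ℤ) → List (ℤ × ℤ)
  | [] => []
  | s :: xs =>
    let r := redSegHat i xs
    if s.1 = i + 1 then
      match r with
      | t :: r' => if t.1 = i then r' else s :: r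
      | [] => [s]
    else if s.1 = i then s :: r
    else r

/-- `Ê_i` on a multisegment listed in left order: replace the segment `(i, z)` carrying
the rightmost uncanceled `-` by `(i+1, z)` (deleting it if `z = i`), or `none` if there
is no uncanceled `-`. -/
def EjHat (i : ℤ) (Δ : List (ℤ × ℤ)) : Option (List (ℤ × ℤ)) :=
  match ((redSegHat i Δ).filter (fun s => s.1 == i)).getLast? with
  | none => none
  | some s => some ((Δ.erase s) ++ (if i + 1 ≤ s.2 then [(i + 1, s.2)] else []))

theorem redSegHat_sublist (i : ℤ) : ∀ Δ : List (ℤ × ℤ), (redSegHat i Δ).Sublist Δ := by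
  intro Δ
  induction Δ with
  | nil => simp [redSegHat]
  | cons s xs ih =>
    unfold redSegHat
    dsimp only
    split
    · rcases hr : redSegHat i xs with _ | ⟨t, r'⟩
      · simp
      · rw [hr] at ih
        change (if t.1 = i then r' else s :: t :: r').Sublist (s :: xs)
        split
        · exact ((List.sublist_cons_self t r').trans ih).trans (List.sublist_cons_self s xs)
        · exact ih.cons₂ s
    · split
      · exact ih.cons₂ s
      · exact ih.trans (List.sublist_cons_self s xs)

theorem nOf_erase (Δ : List (ℤ × ℤ)) (s : ℤ × ℤ) (hs : s ∈ Δ) :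
    nOf (Δ.erase s) = nOf Δ - (s.2 - s.1 + 1) := by
  induction Δ with
  | nil => simp at hs
  | cons a xs ih =>
    by_cases h : a = s
    · subst h; simp [nOf]
    · rw [List.erase_cons_tail (by simp [h])]
      have hs' : s ∈ xs := by
        rcases List.mem_cons.mp hs with h' | h'
        · exact absurd h'.symm h
        · exact h'
      simp only [nOf, List.map_cons, List.sum_cons] at *
      rw [ih hs']; ring

theorem mem_of_getLast?_eq {α : Type*} {l : List α} {x : α} (h : l.getLast? = some x) : x ∈ l := by
  obtain ⟨hne, he⟩ := List.mem_getLast?_eq_getLast (l := l) (x := x) (by simp [Option.mem_def, h])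
  exact he ▸ List.getLast_mem hne

/-- When nonzero, `Ê_i Δ` is again a multisegment, and `n(Ê_i Δ) = n(Δ) - 1`. -/
theorem stmt17 (i : ℤ) (Δ : List (ℤ × ℤ)) (hseg : ∀ s ∈ Δ, s.1 ≤ s.2)
    (hsort : Δ.Pairwise lGE) (Δ' : List (ℤ × ℤ)) (h : EjHat i Δ = some Δ') :
    (∀ s ∈ Δ', s.1 ≤ s.2) ∧ nOf Δ' = nOf Δ - 1 := by
  unfold EjHat at h
  rcases hm : ((redSegHat i Δ).filter (fun s => s.1 == i)).getLast? with _ | s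
  · rw [hm] at h; simp at h
  · rw [hm] at h
    simp only [Option.some.injEq] at h
    subst h
    have hsmem : s ∈ Δ := by
      have h1 : s ∈ (redSegHat i Δ).filter (fun s => s.1 == i) := mem_of_getLast?_eq hm
      have h2 : s ∈ redSegHat i Δ := (List.mem_filter.mp h1).1
      exact (redSegHat_sublist i Δ).mem h2
    have hsi : s.1 = i := by
      have h1 := (List.mem_filter.mp (mem_of_getLast?_eq hm)).2
      simpa using h1
    have hss := hseg s hsmem
    constructor
    · intro t ht
      rcases List.mem_append.mp ht with h'|h'
      · exact hseg t ((Δ.erase_sublist (a := s)).mem h')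
      · by_cases hc : i + 1 ≤ s.2 <;> simp [hc] at h'
        subst h'; simpa using hc
    · have he := nOf_erase Δ s hsmem
      by_cases hc : i + 1 ≤ s.2
      · rw [nOf, List.map_append, List.sum_append, if_pos hc]
        show nOf (Δ.erase s) + _ = _
        rw [he, hsi]
        simp; ring
      · have h2 : s.2 = i := le_antisymm (by omega) (hsi ▸ hss)
        rw [nOf, List.map_append, List.sum_append, if_neg hc]
        show nOf (Δ.erase s) + _ = _
        rw [he, hsi, h2]
        simp
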